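/- Let k ≥ 0 and r = k + 1. Suppose a_2 is continuously differentiable with a_2(x) ≥ a_min > 0 on [a,b], a_0 is continuous with a_0 ≥ 0, and u is twice continuously differentiable on [a,b] and solves −(a_2 u′)′ + a_0 u = f on (a,b) with u(a) = 0 and u′(b) = 0. Let u_h ∈ S_h be the weak finite element solution. Then a_min ‖d_{w,r}Q_h u − d_{w,r}u_h‖_h ≤ ‖a_2 d_{w,r}Q_h u − π_h(a_2 u′)‖_h + ((b−a)+1) ‖a_0 (Q_h^0 u − u)‖_{L²(a,b)}. -/

import Mathlib

open MeasureTheory Set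

noncomputable section

/-- `p` is the discrete weak derivative of order `r` of the weak function
`(v0, vl, vr)` on the interval `(c, d)`: it is a polynomial of degree at most `r`
satisfying `∫ p q = -∫ v0 q' + vr q(d) - vl q(c)` for all polynomials `q` of
degree at most `r`. -/
def IsWeakDeriv (r : ℕ) (c d : ℝ) (v0 : ℝ → ℝ) (vl vr : ℝ) (p : Polynomial ℝ) : Prop :=
  p.degree ≤ (r : WithBot ℕ) ∧ ∀ q : Polynomial ℝ, q.degree ≤ (r : WithBot ℕ) →
    (∫ t in c..d, p.eval t * q.eval t) =
      -(∫ t in c..d, v0 t * q.derivative.eval t) + vr * q.eval d - vl * q.eval c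

/-- `p` is the L²(c,d)-orthogonal projection of `g` onto polynomials of degree at most `l`. -/
def IsL2Proj (l : ℕ) (c d : ℝ) (g : ℝ → ℝ) (p : Polynomial ℝ) : Prop :=
  p.degree ≤ (l : WithBot ℕ) ∧ ∀ q : Polynomial ℝ, q.degree ≤ (l : WithBot ℕ) →
    (∫ t in c..d, (g t - p.eval t) * q.eval t) = 0

/-- `x 0 = a < x 1 < ⋯ < x (N-1) = b` is a partition of `(a,b)`. -/
def IsPartition (N : ℕ) (a b : ℝ) (x : ℕ → ℝ) : Prop :=
  2 ≤ N ∧ x 0 = a ∧ x (N - 1) = b ∧ ∀ i < N - 1, x i < x (i + 1)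

/-- Membership in the weak finite element space `S_h`: on each of the `N - 1` elements the
interior component is a polynomial of degree at most `k`, the nodal values are single
valued, and the nodal value at the left endpoint vanishes. -/
def MemSh (k N : ℕ) (v0 : ℕ → Polynomial ℝ) (vn : ℕ → ℝ) : Prop :=
  (∀ i < N - 1, (v0 i).degree ≤ (k : WithBot ℕ)) ∧ vn 0 = 0

/-- `D i` is the discrete weak derivative of order `r` of the weak finite element function
`(v0, vn)` on the `i`-th element `(x i, x (i+1))`. -/
def IsWeakDerivFam (r N : ℕ) (x : ℕ → ℝ) (v0 : ℕ → Polynomial ℝ) (vn : ℕ → ℝ)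
    (D : ℕ → Polynomial ℝ) : Prop :=
  ∀ i < N - 1, IsWeakDeriv r (x i) (x (i + 1)) (fun t => (v0 i).eval t) (vn i) (vn (i + 1)) (D i)

/-- `(u0, un)` with discrete weak derivatives `Du` is a weak finite element solution:
it belongs to `S_h` and satisfies
`(a2 d_w u_h, d_w v)_h + (a0 u_h⁰, v⁰) = (f, v⁰)` for all `v ∈ S_h`. -/
def IsWFESol (k r N : ℕ) (x : ℕ → ℝ) (a2 a0 f : ℝ → ℝ)
    (u0 : ℕ → Polynomial ℝ) (un : ℕ → ℝ) (Du : ℕ → Polynomial ℝ) : Prop :=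
  MemSh k N u0 un ∧ IsWeakDerivFam r N x u0 un Du ∧
  ∀ (v0 : ℕ → Polynomial ℝ) (vn : ℕ → ℝ) (Dv : ℕ → Polynomial ℝ),
    MemSh k N v0 vn → IsWeakDerivFam r N x v0 vn Dv →
    ((∑ i ∈ Finset.range (N - 1), ∫ t in x i..x (i + 1), a2 t * (Du i).eval t * (Dv i).eval t)
      + ∑ i ∈ Finset.range (N - 1), ∫ t in x i..x (i + 1), a0 t * (u0 i).eval t * (v0 i).eval t)
      = ∑ i ∈ Finset.range (N - 1), ∫ t in x i..x (i + 1), f t * (v0 i).eval t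

/-- The Sobolev norm `‖u‖_m = (∑_{j=0}^m ∫_a^b |u^{(j)}|² dx)^{1/2}` of an `m`-times
continuously differentiable function on `[a,b]`. -/
def sobNorm (m : ℕ) (a b : ℝ) (u : ℝ → ℝ) : ℝ :=
  Real.sqrt (∑ j ∈ Finset.range (m + 1),
    ∫ t in a..b, (iteratedDerivWithin j u (Set.Icc a b) t) ^ 2)

/-- `u` solves the two-point boundary value problem
`-(a2 u')' + a0 u = f` on `(a,b)`, `u(a) = 0`, `u'(b) = 0`. -/
def SolvesBVP (a b : ℝ) (a2 a0 f u : ℝ → ℝ) : Prop :=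
  (∀ x ∈ Set.Ioo a b,
    -(derivWithin (fun t => a2 t * derivWithin u (Set.Icc a b) t) (Set.Icc a b) x)
      + a0 x * u x = f x) ∧
  u a = 0 ∧ derivWithin u (Set.Icc a b) b = 0

open Polynomial intervalIntegral


/-- Polynomial antiderivative. -/
def polyAnt (p : Polynomial ℝ) : Polynomial ℝ :=
  p.sum fun n a => Polynomial.C (a / (n + 1)) * Polynomial.X ^ (n + 1)

lemma polyAnt_deriv (p : Polynomial ℝ) : (polyAnt p).derivative = p := by
  conv_rhs => rw [← Polynomial.sum_C_mul_X_pow_eq p]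
  unfold polyAnt
  rw [Polynomial.sum, Polynomial.sum, map_sum]
  refine Finset.sum_congr rfl fun n hn => ?_
  rw [Polynomial.derivative_C_mul, Polynomial.derivative_X_pow]
  rw [Nat.add_sub_cancel]
  rw [← mul_assoc, ← Polynomial.C_mul]
  congr 2
  push_cast
  have hn0 : ((n : ℝ) + 1) ≠ 0 := by positivity
  field_simp

lemma polyAnt_degree (p : Polynomial ℝ) (k : ℕ) (hp : p.degree ≤ (k : WithBot ℕ)) :
    (polyAnt p).degree ≤ ((k + 1 : ℕ) : WithBot ℕ) := by
  unfold polyAnt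
  rw [Polynomial.sum]
  refine (Polynomial.degree_sum_le _ _).trans ?_
  refine Finset.sup_le fun n hn => ?_
  refine (Polynomial.degree_C_mul_X_pow_le _ _).trans ?_
  have h1 : (n : WithBot ℕ) ≤ (k : WithBot ℕ) :=
    le_trans (Polynomial.le_degree_of_mem_supp n hn) hp
  have h2 : n ≤ k := by exact_mod_cast h1
  exact_mod_cast Nat.succ_le_succ h2

lemma poly_ftc (p : Polynomial ℝ) (c d : ℝ) :
    (∫ t in c..d, p.derivative.eval t) = p.eval d - p.eval c := by
  refine intervalIntegral.integral_eq_sub_of_hasDerivAt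
    (fun t _ => p.hasDerivAt t) ?_
  exact (p.derivative.continuous).intervalIntegrable _ _

lemma int_cs {c d : ℝ} (hcd : c ≤ d) {f g : ℝ → ℝ}
    (hf : ContinuousOn f (Icc c d)) (hg : ContinuousOn g (Icc c d)) :
    (∫ t in c..d, f t * g t) ≤
      Real.sqrt (∫ t in c..d, f t ^ 2) * Real.sqrt (∫ t in c..d, g t ^ 2) := by
  have huicc : uIcc c d = Icc c d := uIcc_of_le hcd
  have hff : IntervalIntegrable (fun t => f t * f t) volume c d :=
    ContinuousOn.intervalIntegrable (by rw [huicc]; exact hf.mul hf)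
  have hgg : IntervalIntegrable (fun t => g t * g t) volume c d :=
    ContinuousOn.intervalIntegrable (by rw [huicc]; exact hg.mul hg)
  have hfg : IntervalIntegrable (fun t => f t * g t) volume c d :=
    ContinuousOn.intervalIntegrable (by rw [huicc]; exact hf.mul hg)
  set A := ∫ t in c..d, f t ^ 2 with hA
  set B := ∫ t in c..d, g t ^ 2 with hB
  set C := ∫ t in c..d, f t * g t with hC
  have hA' : A = ∫ t in c..d, f t * f t := by
    rw [hA]; congr 1; ext t; ring
  have hB' : B = ∫ t in c..d, g t * g t := by
    rw [hB]; congr 1; ext t; ring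
  have hA0 : 0 ≤ A := integral_nonneg hcd fun t _ => sq_nonneg _
  have hB0 : 0 ≤ B := integral_nonneg hcd fun t _ => sq_nonneg _
  have key : C ^ 2 ≤ A * B := by
    have hq : ∀ lam : ℝ, 0 ≤ B * (lam * lam) + (2 * C) * lam + A := by
      intro lam
      have h0 : 0 ≤ ∫ t in c..d, (lam * g t + f t) * (lam * g t + f t) :=
        integral_nonneg hcd fun t _ => mul_self_nonneg _
      have hexp : (∫ t in c..d, (lam * g t + f t) * (lam * g t + f t))
          = B * (lam * lam) + (2 * C) * lam + A := by
        have e1 : (fun t => (lam * g t + f t) * (lam * g t + f t))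
            = fun t => (lam * lam) * (g t * g t) + ((2 * lam) * (f t * g t) + f t * f t) := by
          funext t; ring
        rw [e1, intervalIntegral.integral_add ((hgg).const_mul _)
          (((hfg).const_mul _).add hff),
          intervalIntegral.integral_add ((hfg).const_mul _) hff,
          intervalIntegral.integral_const_mul, intervalIntegral.integral_const_mul,
          ← hA', ← hB', ← hC]
        ring
      linarith [hexp ▸ h0]
    have hd := discrim_le_zero hq
    rw [discrim] at hd
    nlinarith
  calc C ≤ |C| := le_abs_self _
    _ = Real.sqrt (C ^ 2) := (Real.sqrt_sq_eq_abs C).symm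
    _ ≤ Real.sqrt (A * B) := Real.sqrt_le_sqrt key
    _ = Real.sqrt A * Real.sqrt B := Real.sqrt_mul hA0 _

lemma polyII (p q : Polynomial ℝ) (c d : ℝ) :
    IntervalIntegrable (fun t => p.eval t * q.eval t) volume c d :=
  (p.continuous.mul q.continuous).intervalIntegrable _ _

lemma polyII' (p : Polynomial ℝ) (c d : ℝ) :
    IntervalIntegrable (fun t => p.eval t) volume c d :=
  p.continuous.intervalIntegrable _ _

lemma IsWeakDeriv.sub {r : ℕ} {c d : ℝ} {P1 P2 D1 D2 : Polynomial ℝ} {l1 r1 l2 r2 : ℝ}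
    (h1 : IsWeakDeriv r c d (fun t => P1.eval t) l1 r1 D1)
    (h2 : IsWeakDeriv r c d (fun t => P2.eval t) l2 r2 D2) :
    IsWeakDeriv r c d (fun t => (P1 - P2).eval t) (l1 - l2) (r1 - r2) (D1 - D2) := by
  refine ⟨(Polynomial.degree_sub_le _ _).trans (max_le h1.1 h2.1), fun q hq => ?_⟩
  have e1 := h1.2 q hq
  have e2 := h2.2 q hq
  have i1 : (∫ t in c..d, (D1 - D2).eval t * q.eval t)
      = (∫ t in c..d, D1.eval t * q.eval t) - ∫ t in c..d, D2.eval t * q.eval t := by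
    rw [← intervalIntegral.integral_sub (polyII _ _ _ _) (polyII _ _ _ _)]
    congr 1; funext t; simp only [Polynomial.eval_sub]; ring
  have i2 : (∫ t in c..d, (P1 - P2).eval t * q.derivative.eval t)
      = (∫ t in c..d, P1.eval t * q.derivative.eval t)
        - ∫ t in c..d, P2.eval t * q.derivative.eval t := by
    rw [← intervalIntegral.integral_sub (polyII _ _ _ _) (polyII _ _ _ _)]
    congr 1; funext t; simp only [Polynomial.eval_sub]; ring
  rw [i1, i2, e1, e2]; ring

lemma IsWeakDeriv.jump {r : ℕ} {c d : ℝ} {P D : Polynomial ℝ} {vl vr : ℝ}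
    (h : IsWeakDeriv r c d (fun t => P.eval t) vl vr D) :
    (∫ t in c..d, D.eval t) = vr - vl := by
  have h0 : ((1 : Polynomial ℝ)).degree ≤ ((r : ℕ) : WithBot ℕ) :=
    Polynomial.degree_one_le.trans (by exact_mod_cast Nat.zero_le r)
  have := h.2 1 h0
  simpa using this
lemma my_sum_sqrt (s : Finset ℕ) (F G : ℕ → ℝ) (hF : ∀ i ∈ s, 0 ≤ F i) (hG : ∀ i ∈ s, 0 ≤ G i) :
    ∑ i ∈ s, Real.sqrt (F i) * Real.sqrt (G i)
      ≤ Real.sqrt (∑ i ∈ s, F i) * Real.sqrt (∑ i ∈ s, G i) := by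
  have h := Real.sum_mul_le_sqrt_mul_sqrt s (fun i => Real.sqrt (F i)) (fun i => Real.sqrt (G i))
  refine h.trans ?_
  rw [show ∑ i ∈ s, Real.sqrt (F i) ^ 2 = ∑ i ∈ s, F i from
      Finset.sum_congr rfl fun i hi => Real.sq_sqrt (hF i hi),
    show ∑ i ∈ s, Real.sqrt (G i) ^ 2 = ∑ i ∈ s, G i from
      Finset.sum_congr rfl fun i hi => Real.sq_sqrt (hG i hi)]

section Poincare

variable {k N : ℕ} {a b : ℝ} {x : ℕ → ℝ}

lemma poincare (hpart : IsPartition N a b x)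
    (v0 : ℕ → Polynomial ℝ) (vn : ℕ → ℝ) (Dv : ℕ → Polynomial ℝ)
    (hdeg : ∀ i < N - 1, (v0 i).degree ≤ (k : WithBot ℕ)) (hvn0 : vn 0 = 0)
    (hDv : IsWeakDerivFam (k + 1) N x v0 vn Dv) :
    Real.sqrt (∑ i ∈ Finset.range (N - 1), ∫ t in x i..x (i + 1), (v0 i).eval t ^ 2)
      ≤ (b - a) * Real.sqrt (∑ i ∈ Finset.range (N - 1),
          ∫ t in x i..x (i + 1), (Dv i).eval t ^ 2) := by
  obtain ⟨hN2, hx0, hxn, hxlt⟩ := hpart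
  set n := N - 1 with hn
  have hn1 : 1 ≤ n := by omega
  have hle : ∀ i < n, x i ≤ x (i + 1) := fun i hi => (hxlt i hi).le
  have hmono : ∀ j ≤ n, ∀ i ≤ j, x i ≤ x j := by
    intro j
    induction j with
    | zero => intro _ i hi; interval_cases i; exact le_rfl
    | succ m ih =>
      intro hm i hi
      rcases Nat.le_succ_iff.mp hi with h | h
      · exact (ih (by omega) i (by omega)).trans (hle m (by omega))
      · subst h; exact le_rfl
  have hba : a ≤ b := by
    rw [← hx0, ← hxn]; exact hmono n le_rfl 0 (Nat.zero_le _)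
  -- jumps
  have hjump : ∀ i < n, (∫ t in x i..x (i + 1), (Dv i).eval t) = vn (i + 1) - vn i :=
    fun i hi => (hDv i hi).jump
  have hvn : ∀ i ≤ n, vn i = ∑ j ∈ Finset.range i, ∫ t in x j..x (j + 1), (Dv j).eval t := by
    intro i hi
    have h1 := Finset.sum_range_sub (f := vn) i
    rw [show vn i = vn i - vn 0 by rw [hvn0]; ring, ← h1]
    exact (Finset.sum_congr rfl fun j hj =>
      (hjump j (lt_of_lt_of_le (Finset.mem_range.mp hj) hi))).symm
  set M : ℝ := ∑ j ∈ Finset.range n, ∫ t in x j..x (j + 1), |(Dv j).eval t| with hM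
  have habsnn : ∀ j < n, 0 ≤ ∫ t in x j..x (j + 1), |(Dv j).eval t| :=
    fun j hj => intervalIntegral.integral_nonneg (hle j hj) fun t _ => abs_nonneg _
  have hM0 : 0 ≤ M :=
    Finset.sum_nonneg fun j hj => habsnn j (Finset.mem_range.mp hj)
  have hvnM : ∀ i < n, |vn i| + (∫ t in x i..x (i + 1), |(Dv i).eval t|) ≤ M := by
    intro i hi
    have h1 : |vn i| ≤ ∑ j ∈ Finset.range i, ∫ t in x j..x (j + 1), |(Dv j).eval t| := by
      rw [hvn i (by omega)]
      refine (Finset.abs_sum_le_sum_abs _ _).trans (Finset.sum_le_sum fun j hj => ?_)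
      exact intervalIntegral.abs_integral_le_integral_abs
        (hle j (by have := Finset.mem_range.mp hj; omega))
    have h2 : (∑ j ∈ Finset.range (i + 1), ∫ t in x j..x (j + 1), |(Dv j).eval t|) ≤ M := by
      refine Finset.sum_le_sum_of_subset_of_nonneg ?_ fun j hj _ =>
        habsnn j (Finset.mem_range.mp hj)
      exact Finset.range_subset_range.mpr (by omega)
    rw [Finset.sum_range_succ] at h2
    linarith
  -- per element: ∫ v0² ≤ √(h_i M²)·√(∫ v0²)
  have helem : ∀ i < n, (∫ t in x i..x (i + 1), (v0 i).eval t ^ 2)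
      ≤ Real.sqrt ((x (i + 1) - x i) * M ^ 2)
        * Real.sqrt (∫ t in x i..x (i + 1), (v0 i).eval t ^ 2) := by
    intro i hi
    have hcd : x i ≤ x (i + 1) := hle i hi
    set c := x i with hc
    set d := x (i + 1) with hd
    set q : Polynomial ℝ := polyAnt (v0 i) - Polynomial.C ((polyAnt (v0 i)).eval c) with hq
    set B : Polynomial ℝ := polyAnt (Dv i) - Polynomial.C ((polyAnt (Dv i)).eval c) with hB
    set W : Polynomial ℝ := Polynomial.C (vn i) + B with hW
    have hqd : q.derivative = v0 i := by
      rw [hq, Polynomial.derivative_sub, Polynomial.derivative_C, sub_zero, polyAnt_deriv]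
    have hBd : B.derivative = Dv i := by
      rw [hB, Polynomial.derivative_sub, Polynomial.derivative_C, sub_zero, polyAnt_deriv]
    have hqc : q.eval c = 0 := by simp [hq]
    have hBc : B.eval c = 0 := by simp [hB]
    have hqdeg : q.degree ≤ ((k + 1 : ℕ) : WithBot ℕ) := by
      refine (Polynomial.degree_sub_le _ _).trans
        (max_le (polyAnt_degree _ k (hdeg i hi)) ?_)
      exact Polynomial.degree_C_le.trans (by exact_mod_cast Nat.zero_le (k + 1))
    have hID := (hDv i hi).2 q hqdeg
    rw [hqd] at hID
    rw [hqc, mul_zero, sub_zero] at hID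
    simp only [← hc, ← hd] at hID
    have hsq : (∫ t in c..d, (v0 i).eval t ^ 2)
        = ∫ t in c..d, (v0 i).eval t * (v0 i).eval t := by
      congr 1; funext t; ring
    have hqftc : (∫ t in c..d, (v0 i).eval t) = q.eval d := by
      have h := poly_ftc q c d; rw [hqd] at h; rw [h, hqc, sub_zero]
    have hBftc : ∀ t, B.eval t = ∫ s in c..t, (Dv i).eval s := by
      intro t
      have h := poly_ftc B c t; rw [hBd] at h; rw [h, hBc, sub_zero]
    have hBdval : B.eval d = vn (i + 1) - vn i := by rw [hBftc d, hjump i hi]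
    have hprod : (∫ t in c..d, (Dv i).eval t * q.eval t)
        + (∫ t in c..d, B.eval t * (v0 i).eval t) = B.eval d * q.eval d := by
      have h1 := poly_ftc (B * q) c d
      rw [Polynomial.derivative_mul, hBd, hqd] at h1
      have h2 : (∫ t in c..d, (Dv i * q + B * v0 i).eval t)
          = (∫ t in c..d, (Dv i).eval t * q.eval t)
            + ∫ t in c..d, B.eval t * (v0 i).eval t := by
        rw [← intervalIntegral.integral_add (polyII _ _ _ _) (polyII _ _ _ _)]
        congr 1; funext t; simp [Polynomial.eval_add, Polynomial.eval_mul]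
      rw [h2] at h1
      rw [h1]; simp [Polynomial.eval_mul, hqc]
    have hkey : (∫ t in c..d, (v0 i).eval t ^ 2)
        = ∫ t in c..d, W.eval t * (v0 i).eval t := by
      have hsplit : (∫ t in c..d, W.eval t * (v0 i).eval t)
          = vn i * (∫ t in c..d, (v0 i).eval t)
            + ∫ t in c..d, B.eval t * (v0 i).eval t := by
        rw [← intervalIntegral.integral_const_mul, ← intervalIntegral.integral_add
          ((polyII' (v0 i) c d).const_mul _) (polyII _ _ _ _)]
        congr 1; funext t; simp [hW, Polynomial.eval_add]; ring
      rw [hsplit, hqftc, hsq]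
      linear_combination hID - hprod - eval d q * hBdval
    have hWb : ∀ t ∈ Icc c d, |W.eval t| ≤ M := by
      intro t ht
      have h1 : |B.eval t| ≤ ∫ s in c..d, |(Dv i).eval s| := by
        rw [hBftc t]
        refine (intervalIntegral.abs_integral_le_integral_abs ht.1).trans ?_
        refine intervalIntegral.integral_mono_interval le_rfl ht.1 ht.2 ?_ ?_
        · exact Filter.Eventually.of_forall fun s => abs_nonneg _
        · exact ((Dv i).continuous.abs).intervalIntegrable _ _
      have h2 := hvnM i hi
      have h3 : |W.eval t| ≤ |vn i| + |B.eval t| := by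
        rw [hW]; simp only [Polynomial.eval_add, Polynomial.eval_C]; exact abs_add_le _ _
      linarith
    have hWsq : (∫ t in c..d, W.eval t ^ 2) ≤ (d - c) * M ^ 2 := by
      have h1 : (∫ t in c..d, W.eval t ^ 2) ≤ ∫ t in c..d, M ^ 2 := by
        refine intervalIntegral.integral_mono_on hcd
          ((W.continuous.pow 2).intervalIntegrable _ _) intervalIntegrable_const
          fun t ht => ?_
        have h := abs_le.mp (hWb t ht)
        exact sq_le_sq' h.1 h.2
      rw [intervalIntegral.integral_const, smul_eq_mul] at h1
      exact h1
    calc (∫ t in c..d, (v0 i).eval t ^ 2)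
        = ∫ t in c..d, W.eval t * (v0 i).eval t := hkey
      _ ≤ Real.sqrt (∫ t in c..d, W.eval t ^ 2)
          * Real.sqrt (∫ t in c..d, (v0 i).eval t ^ 2) :=
          int_cs hcd W.continuous.continuousOn (v0 i).continuous.continuousOn
      _ ≤ Real.sqrt ((d - c) * M ^ 2)
          * Real.sqrt (∫ t in c..d, (v0 i).eval t ^ 2) :=
          mul_le_mul_of_nonneg_right (Real.sqrt_le_sqrt hWsq) (Real.sqrt_nonneg _)
  -- M ≤ √(b-a)·E
  have hME : M ≤ Real.sqrt (b - a)
      * Real.sqrt (∑ i ∈ Finset.range n, ∫ t in x i..x (i + 1), (Dv i).eval t ^ 2) := by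
    have h1 : ∀ j ∈ Finset.range n, (∫ t in x j..x (j + 1), |(Dv j).eval t|)
        ≤ Real.sqrt (x (j + 1) - x j)
          * Real.sqrt (∫ t in x j..x (j + 1), (Dv j).eval t ^ 2) := by
      intro j hj
      have hj' := Finset.mem_range.mp hj
      have hcd := hle j hj'
      have h := int_cs hcd (f := fun t => |(Dv j).eval t|) (g := fun _ => (1 : ℝ))
        ((Dv j).continuous.abs.continuousOn) continuousOn_const
      simp only [mul_one] at h
      refine h.trans ?_
      have e1 : (∫ t in x j..x (j + 1), |(Dv j).eval t| ^ 2)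
          = ∫ t in x j..x (j + 1), (Dv j).eval t ^ 2 := by
        congr 1; funext t; rw [sq_abs]
      have e2 : (∫ t in x j..x (j + 1), (1 : ℝ) ^ 2) = x (j + 1) - x j := by
        simp
      rw [e1, e2, mul_comm]
    refine (Finset.sum_le_sum h1).trans ?_
    have h2 := my_sum_sqrt (Finset.range n) (fun j => x (j + 1) - x j)
      (fun j => ∫ t in x j..x (j + 1), (Dv j).eval t ^ 2)
      (fun j hj => sub_nonneg.mpr (hle j (Finset.mem_range.mp hj)))
      (fun j hj => intervalIntegral.integral_nonneg (hle j (Finset.mem_range.mp hj))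
        fun t _ => sq_nonneg _)
    refine h2.trans ?_
    rw [Finset.sum_range_sub (f := x) n, hx0, hxn]
  -- assemble
  set E := Real.sqrt (∑ i ∈ Finset.range n, ∫ t in x i..x (i + 1), (Dv i).eval t ^ 2) with hE
  have hE0 : 0 ≤ E := Real.sqrt_nonneg _
  set Vsq := ∑ i ∈ Finset.range n, ∫ t in x i..x (i + 1), (v0 i).eval t ^ 2 with hVsq
  have hVsq0 : 0 ≤ Vsq := Finset.sum_nonneg fun i hi =>
    intervalIntegral.integral_nonneg (hle i (Finset.mem_range.mp hi)) fun t _ => sq_nonneg _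
  have hsum : Vsq ≤ Real.sqrt ((b - a) * M ^ 2) * Real.sqrt Vsq := by
    calc Vsq ≤ ∑ i ∈ Finset.range n, Real.sqrt ((x (i + 1) - x i) * M ^ 2)
          * Real.sqrt (∫ t in x i..x (i + 1), (v0 i).eval t ^ 2) :=
        Finset.sum_le_sum fun i hi => helem i (Finset.mem_range.mp hi)
      _ ≤ Real.sqrt (∑ i ∈ Finset.range n, (x (i + 1) - x i) * M ^ 2) * Real.sqrt Vsq :=
        my_sum_sqrt _ _ _
          (fun i hi => mul_nonneg (sub_nonneg.mpr (hle i (Finset.mem_range.mp hi)))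
            (sq_nonneg _))
          (fun i hi => intervalIntegral.integral_nonneg (hle i (Finset.mem_range.mp hi))
            fun t _ => sq_nonneg _)
      _ = Real.sqrt ((b - a) * M ^ 2) * Real.sqrt Vsq := by
        rw [← Finset.sum_mul, Finset.sum_range_sub (f := x) n, hx0, hxn]
  have hfac : Real.sqrt ((b - a) * M ^ 2) ≤ (b - a) * E := by
    rw [Real.sqrt_mul (by linarith) (M ^ 2), Real.sqrt_sq hM0]
    calc Real.sqrt (b - a) * M ≤ Real.sqrt (b - a) * (Real.sqrt (b - a) * E) :=
        mul_le_mul_of_nonneg_left hME (Real.sqrt_nonneg _)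
      _ = (b - a) * E := by rw [← mul_assoc, Real.mul_self_sqrt (by linarith)]
  have hfinal : Vsq ≤ ((b - a) * E) * Real.sqrt Vsq :=
    hsum.trans (mul_le_mul_of_nonneg_right hfac (Real.sqrt_nonneg _))
  rcases eq_or_lt_of_le (Real.sqrt_nonneg Vsq) with h0 | h0
  · rw [← h0]; exact mul_nonneg (by linarith) hE0
  · have h1 : Real.sqrt Vsq * Real.sqrt Vsq ≤ ((b - a) * E) * Real.sqrt Vsq := by
      rw [Real.mul_self_sqrt hVsq0]; exact hfinal
    exact le_of_mul_le_mul_right h1 h0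

end Poincare

set_option maxHeartbeats 1000000 in
/-- Theorem 4.3. Let `k ≥ 0`, `r = k + 1`. Suppose `a2 ∈ C¹([a,b])` with
`a2 ≥ a_min > 0`, `a0` continuous and nonnegative, `u ∈ C²([a,b])` solves the boundary value
problem, and `u_h ∈ S_h` is the weak finite element solution. With `Pk i = P_h^k u`,
`Dq i = d_{w,r} Q_h u` and `ph i` the pieces of `π_h (a2 u')` on the `i`-th element,
`a_min ‖d_{w,r}Q_h u − d_{w,r}u_h‖_h ≤ ‖a2 d_{w,r}Q_h u − π_h(a2 u')‖_h
  + ((b−a)+1) ‖a0 (Q_h⁰ u − u)‖_{L²(a,b)}`. -/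
theorem error_inequality (k : ℕ) (a b amin : ℝ) (hab : a < b) (hamin : 0 < amin)
    (a2 a0 f u : ℝ → ℝ)
    (ha2 : ContDiffOn ℝ 1 a2 (Set.Icc a b)) (ha2lb : ∀ t ∈ Set.Icc a b, amin ≤ a2 t)
    (ha0c : ContinuousOn a0 (Set.Icc a b)) (ha0nn : ∀ t ∈ Set.Icc a b, 0 ≤ a0 t)
    (hu : ContDiffOn ℝ 2 u (Set.Icc a b))
    (hbvp : SolvesBVP a b a2 a0 f u)
    (N : ℕ) (x : ℕ → ℝ) (hpart : IsPartition N a b x)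
    (u0 : ℕ → Polynomial ℝ) (un : ℕ → ℝ) (Du : ℕ → Polynomial ℝ)
    (hsol : IsWFESol k (k + 1) N x a2 a0 f u0 un Du)
    (Pk : ℕ → Polynomial ℝ) (hPk : ∀ i < N - 1, IsL2Proj k (x i) (x (i + 1)) u (Pk i))
    (Dq : ℕ → Polynomial ℝ)
    (hDq : ∀ i < N - 1, IsWeakDeriv (k + 1) (x i) (x (i + 1)) (fun t => (Pk i).eval t)
      (u (x i)) (u (x (i + 1))) (Dq i))
    (ph : ℕ → Polynomial ℝ)
    (hph : ∀ i < N - 1, (ph i).degree ≤ ((k + 1 : ℕ) : WithBot ℕ) ∧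
      (ph i).eval (x i) = a2 (x i) * derivWithin u (Set.Icc a b) (x i) ∧
      ∀ q : Polynomial ℝ, q.degree ≤ (k : WithBot ℕ) →
        (∫ t in x i..x (i + 1), (ph i).derivative.eval t * q.eval t)
          = ∫ t in x i..x (i + 1),
              derivWithin (fun s => a2 s * derivWithin u (Set.Icc a b) s) (Set.Icc a b) t
                * q.eval t) :
    amin * Real.sqrt (∑ i ∈ Finset.range (N - 1),
        ∫ t in x i..x (i + 1), ((Dq i).eval t - (Du i).eval t) ^ 2)
      ≤ Real.sqrt (∑ i ∈ Finset.range (N - 1),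
          ∫ t in x i..x (i + 1), (a2 t * (Dq i).eval t - (ph i).eval t) ^ 2)
        + ((b - a) + 1) * Real.sqrt (∑ i ∈ Finset.range (N - 1),
            ∫ t in x i..x (i + 1), (a0 t * ((Pk i).eval t - u t)) ^ 2) := by
  obtain ⟨hN2, hx0, hxn, hxlt⟩ := id hpart
  set n := N - 1 with hn
  have hn1 : 1 ≤ n := by omega
  have hlt : ∀ i < n, x i < x (i + 1) := hxlt
  have hle : ∀ i < n, x i ≤ x (i + 1) := fun i hi => (hlt i hi).le
  have hmono : ∀ j ≤ n, ∀ i ≤ j, x i ≤ x j := by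
    intro j
    induction j with
    | zero => intro _ i hi; interval_cases i; exact le_rfl
    | succ m ih =>
      intro hm i hi
      rcases Nat.le_succ_iff.mp hi with h | h
      · exact (ih (by omega) i (by omega)).trans (hle m (by omega))
      · subst h; exact le_rfl
  have hxa : ∀ i ≤ n, a ≤ x i := fun i hi => by
    rw [← hx0]; exact hmono i hi 0 (Nat.zero_le _)
  have hxb : ∀ i ≤ n, x i ≤ b := fun i hi => by
    rw [← hxn]; exact hmono n le_rfl i hi
  have hIccsub : ∀ i < n, Icc (x i) (x (i + 1)) ⊆ Icc a b := fun i hi =>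
    Icc_subset_Icc (hxa i (by omega)) (hxb (i + 1) (by omega))
  have hba : a ≤ b := hab.le
  have hudiff : UniqueDiffOn ℝ (Icc a b) := uniqueDiffOn_Icc hab
  -- the flux g = a2 * u' and its derivative
  set g : ℝ → ℝ := fun t => a2 t * derivWithin u (Set.Icc a b) t with hg_def
  set g' : ℝ → ℝ := fun t => derivWithin g (Set.Icc a b) t with hg'_def
  have hu' : ContDiffOn ℝ 1 (derivWithin u (Set.Icc a b)) (Icc a b) :=
    hu.derivWithin hudiff (by norm_num)
  have hg : ContDiffOn ℝ 1 g (Icc a b) := ha2.mul hu'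
  have hgc : ContinuousOn g (Icc a b) := hg.continuousOn
  have hg'c : ContinuousOn g' (Icc a b) := hg.continuousOn_derivWithin hudiff le_rfl
  have hgderiv : ∀ t ∈ Ioo a b, HasDerivAt g (g' t) t := by
    intro t ht
    have h1 : Icc a b ∈ nhds t := Icc_mem_nhds ht.1 ht.2
    exact ((hg.differentiableOn one_ne_zero t (Ioo_subset_Icc_self ht)).hasDerivWithinAt).hasDerivAt h1
  have hgFTC : ∀ i < n, (∫ t in x i..x (i + 1), g' t) = g (x (i + 1)) - g (x i) := by
    intro i hi
    refine intervalIntegral.integral_eq_sub_of_hasDeriv_right_of_le (hle i hi)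
      (hgc.mono (hIccsub i hi)) (fun t ht => ?_) ?_
    · refine (hgderiv t ⟨lt_of_le_of_lt (hxa i (by omega)) ht.1,
        lt_of_lt_of_le ht.2 (hxb (i + 1) (by omega))⟩).hasDerivWithinAt
    · exact ContinuousOn.intervalIntegrable
        (by rw [uIcc_of_le (hle i hi)]; exact hg'c.mono (hIccsub i hi))
  have hpde : ∀ t ∈ Ioo a b, g' t = a0 t * u t - f t := by
    intro t ht
    have h := hbvp.1 t ht
    rw [hg'_def, hg_def]
    linarith [h]
  -- the error function w = Q_h u - u_h
  set w0 : ℕ → Polynomial ℝ := fun i => Pk i - u0 i with hw0_def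
  set wn : ℕ → ℝ := fun i => u (x i) - un i with hwn_def
  set Dw : ℕ → Polynomial ℝ := fun i => Dq i - Du i with hDw_def
  have hwD : IsWeakDerivFam (k + 1) N x w0 wn Dw := fun i hi =>
    (hDq i hi).sub (hsol.2.1 i hi)
  have hwdeg : ∀ i < N - 1, (w0 i).degree ≤ (k : WithBot ℕ) := fun i hi =>
    (Polynomial.degree_sub_le _ _).trans (max_le (hPk i hi).1 (hsol.1.1 i hi))
  have hwn0 : wn 0 = 0 := by
    rw [hwn_def]; simp only [hx0, hbvp.2.1, hsol.1.2, sub_zero]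
  have hwmem : MemSh k N w0 wn := ⟨hwdeg, hwn0⟩
  have hsch := hsol.2.2 w0 wn Dw hwmem hwD
  -- node values of ph
  have hphval : ∀ i < n, (ph i).eval (x (i + 1)) = g (x (i + 1)) := by
    intro i hi
    obtain ⟨hdeg, hval, hproj⟩ := hph i hi
    have h1 := poly_ftc (ph i) (x i) (x (i + 1))
    have h2 := hproj 1 (Polynomial.degree_one_le.trans (by exact_mod_cast Nat.zero_le k))
    simp only [Polynomial.eval_one, mul_one] at h2
    rw [h2] at h1
    rw [hgFTC i hi] at h1
    have hvg : (ph i).eval (x i) = g (x i) := hval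
    linarith
    -- integrability helper
  have hint : ∀ i < n, ∀ F : ℝ → ℝ, ContinuousOn F (Icc (x i) (x (i + 1))) →
      IntervalIntegrable F volume (x i) (x (i + 1)) := fun i hi F hF =>
    ContinuousOn.intervalIntegrable (by rw [uIcc_of_le (hle i hi)]; exact hF)
  -- consistency, elementwise
  have hcons : ∀ i < n, (∫ t in x i..x (i + 1), (Dw i).eval t * (ph i).eval t)
      + (∫ t in x i..x (i + 1), (w0 i).eval t * g' t)
      = wn (i + 1) * g (x (i + 1)) - wn i * g (x i) := by
    intro i hi
    have hID : (∫ t in x i..x (i + 1), (Dw i).eval t * (ph i).eval t)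
        = -(∫ t in x i..x (i + 1), (w0 i).eval t * (ph i).derivative.eval t)
          + wn (i + 1) * (ph i).eval (x (i + 1)) - wn i * (ph i).eval (x i) :=
      (hwD i hi).2 (ph i) (hph i hi).1
    have hproj := (hph i hi).2.2 (w0 i) (hwdeg i hi)
    have e1 : (∫ t in x i..x (i + 1), (w0 i).eval t * (ph i).derivative.eval t)
        = ∫ t in x i..x (i + 1), (w0 i).eval t * g' t := by
      have c1 : (∫ t in x i..x (i + 1), (w0 i).eval t * (ph i).derivative.eval t)
          = ∫ t in x i..x (i + 1), (ph i).derivative.eval t * (w0 i).eval t := by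
        congr 1; funext t; ring
      have c2 : (∫ t in x i..x (i + 1), (w0 i).eval t * g' t)
          = ∫ t in x i..x (i + 1), g' t * (w0 i).eval t := by
        congr 1; funext t; ring
      rw [c1, c2, hproj]
    rw [e1, hphval i hi, show (ph i).eval (x i) = g (x i) from (hph i hi).2.1] at hID
    linarith
  -- consistency, summed
  have hconsSum : (∑ i ∈ Finset.range n, ∫ t in x i..x (i + 1), (Dw i).eval t * (ph i).eval t)
      = -(∑ i ∈ Finset.range n, ∫ t in x i..x (i + 1), (w0 i).eval t * g' t) := by
    have h1 : (∑ i ∈ Finset.range n,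
        ((∫ t in x i..x (i + 1), (Dw i).eval t * (ph i).eval t)
          + ∫ t in x i..x (i + 1), (w0 i).eval t * g' t))
        = ∑ i ∈ Finset.range n, (wn (i + 1) * g (x (i + 1)) - wn i * g (x i)) :=
      Finset.sum_congr rfl fun i hi => hcons i (Finset.mem_range.mp hi)
    rw [Finset.sum_add_distrib, Finset.sum_range_sub (f := fun i => wn i * g (x i)) n] at h1
    have h2 : wn n * g (x n) = 0 := by
      rw [hxn]
      have hgb : g b = 0 := by
        show a2 b * derivWithin u (Set.Icc a b) b = 0
        rw [hbvp.2.2, mul_zero]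
      rw [hgb, mul_zero]
    have h3 : wn 0 * g (x 0) = 0 := by rw [hwn0, zero_mul]
    rw [h2, h3] at h1
    linarith
  -- PDE substitution
  have hK : ∀ i < n, (∫ t in x i..x (i + 1), (w0 i).eval t * g' t)
      = (∫ t in x i..x (i + 1), a0 t * u t * (w0 i).eval t)
        - ∫ t in x i..x (i + 1), f t * (w0 i).eval t := by
    intro i hi
    have hsub := hIccsub i hi
    have hne : ∀ᵐ (t : ℝ) ∂(volume : Measure ℝ), t ≠ x (i + 1) := by
      refine MeasureTheory.ae_iff.mpr ?_
      simp only [ne_eq, not_not, Set.setOf_eq_eq_singleton]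
      exact Real.volume_singleton
    have hIoo : ∀ᵐ (t : ℝ) ∂(volume : Measure ℝ), t ∈ Set.uIoc (x i) (x (i + 1)) → t ∈ Ioo a b := by
      filter_upwards [hne] with t ht hmem
      rw [uIoc_of_le (hle i hi)] at hmem
      constructor
      · exact lt_of_le_of_lt (hxa i (by omega)) hmem.1
      · rcases lt_or_eq_of_le hmem.2 with h | h
        · exact lt_of_lt_of_le h (hxb (i + 1) (by omega))
        · exact absurd h ht
    have h_int_gw : IntervalIntegrable (fun t => (w0 i).eval t * g' t) volume
        (x i) (x (i + 1)) :=
      hint i hi _ (((w0 i).continuous.continuousOn).mul (hg'c.mono hsub))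
    have h_int_au : IntervalIntegrable (fun t => a0 t * u t * (w0 i).eval t) volume
        (x i) (x (i + 1)) :=
      hint i hi _ (((ha0c.mono hsub).mul (hu.continuousOn.mono hsub)).mul
        ((w0 i).continuous.continuousOn))
    have h_int_fw : IntervalIntegrable (fun t => f t * (w0 i).eval t) volume
        (x i) (x (i + 1)) := by
      refine (h_int_au.sub h_int_gw).congr_ae ?_
      refine (MeasureTheory.ae_restrict_iff' measurableSet_uIoc).mpr ?_
      filter_upwards [hIoo] with t hIm hmem
      rw [hpde t (hIm hmem)]
      ring
    have hae : (∫ t in x i..x (i + 1), (w0 i).eval t * g' t)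
        = ∫ t in x i..x (i + 1), (a0 t * u t * (w0 i).eval t - f t * (w0 i).eval t) := by
      refine intervalIntegral.integral_congr_ae ?_
      filter_upwards [hIoo] with t hIm hmem
      rw [hpde t (hIm hmem)]
      ring
    rw [hae, intervalIntegral.integral_sub h_int_au h_int_fw]
    -- summed PDE substitution
  have hKsum : (∑ i ∈ Finset.range n, ∫ t in x i..x (i + 1), (w0 i).eval t * g' t)
      = (∑ i ∈ Finset.range n, ∫ t in x i..x (i + 1), a0 t * u t * (w0 i).eval t)
        - ∑ i ∈ Finset.range n, ∫ t in x i..x (i + 1), f t * (w0 i).eval t := by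
    rw [← Finset.sum_sub_distrib]
    exact Finset.sum_congr rfl fun i hi => hK i (Finset.mem_range.mp hi)
  -- elementwise linear splittings
  have hL1 : ∀ i < n, (∫ t in x i..x (i + 1), a2 t * (Dw i).eval t * (Dw i).eval t)
      + (∫ t in x i..x (i + 1), a2 t * (Du i).eval t * (Dw i).eval t)
      = (∫ t in x i..x (i + 1), (a2 t * (Dq i).eval t - (ph i).eval t) * (Dw i).eval t)
        + ∫ t in x i..x (i + 1), (Dw i).eval t * (ph i).eval t := by
    intro i hi
    have hsub := hIccsub i hi
    have ha2' : ContinuousOn a2 (Icc (x i) (x (i + 1))) := ha2.continuousOn.mono hsub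
    have i1 := hint i hi (fun t => a2 t * (Dw i).eval t * (Dw i).eval t) ((ha2'.mul ((Dw i).continuous.continuousOn)).mul
      ((Dw i).continuous.continuousOn))
    have i2 := hint i hi (fun t => a2 t * (Du i).eval t * (Dw i).eval t) ((ha2'.mul ((Du i).continuous.continuousOn)).mul
      ((Dw i).continuous.continuousOn))
    have i3 := hint i hi (fun t => (a2 t * (Dq i).eval t - (ph i).eval t) * (Dw i).eval t) (((ha2'.mul ((Dq i).continuous.continuousOn)).sub
      ((ph i).continuous.continuousOn)).mul ((Dw i).continuous.continuousOn))
    have i4 := hint i hi (fun t => (Dw i).eval t * (ph i).eval t) (((Dw i).continuous.continuousOn).mul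
      ((ph i).continuous.continuousOn))
    rw [← intervalIntegral.integral_add i1 i2, ← intervalIntegral.integral_add i3 i4]
    congr 1; funext t
    simp only [hDw_def, Polynomial.eval_sub]
    ring
  have hL1sum : (∑ i ∈ Finset.range n, ∫ t in x i..x (i + 1),
        a2 t * (Dw i).eval t * (Dw i).eval t)
      + (∑ i ∈ Finset.range n, ∫ t in x i..x (i + 1), a2 t * (Du i).eval t * (Dw i).eval t)
      = (∑ i ∈ Finset.range n, ∫ t in x i..x (i + 1),
          (a2 t * (Dq i).eval t - (ph i).eval t) * (Dw i).eval t)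
        + ∑ i ∈ Finset.range n, ∫ t in x i..x (i + 1), (Dw i).eval t * (ph i).eval t := by
    rw [← Finset.sum_add_distrib, ← Finset.sum_add_distrib]
    exact Finset.sum_congr rfl fun i hi => hL1 i (Finset.mem_range.mp hi)
  have hT3split : ∀ i < n, (∫ t in x i..x (i + 1), a0 t * (u0 i).eval t * (w0 i).eval t)
      = (∫ t in x i..x (i + 1), a0 t * (Pk i).eval t * (w0 i).eval t)
        - ∫ t in x i..x (i + 1), a0 t * (w0 i).eval t ^ 2 := by
    intro i hi
    have hsub := hIccsub i hi
    have ha0' : ContinuousOn a0 (Icc (x i) (x (i + 1))) := ha0c.mono hsub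
    have i1 := hint i hi (fun t => a0 t * (Pk i).eval t * (w0 i).eval t) ((ha0'.mul ((Pk i).continuous.continuousOn)).mul
      ((w0 i).continuous.continuousOn))
    have i2 := hint i hi (fun t => a0 t * (w0 i).eval t ^ 2) (ha0'.mul (((w0 i).continuous.pow 2).continuousOn))
    rw [← intervalIntegral.integral_sub i1 i2]
    congr 1; funext t
    simp only [hw0_def, Polynomial.eval_sub]
    ring
  have hT3sum : (∑ i ∈ Finset.range n, ∫ t in x i..x (i + 1),
        a0 t * (u0 i).eval t * (w0 i).eval t)
      = (∑ i ∈ Finset.range n, ∫ t in x i..x (i + 1), a0 t * (Pk i).eval t * (w0 i).eval t)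
        - ∑ i ∈ Finset.range n, ∫ t in x i..x (i + 1), a0 t * (w0 i).eval t ^ 2 := by
    rw [← Finset.sum_sub_distrib]
    exact Finset.sum_congr rfl fun i hi => hT3split i (Finset.mem_range.mp hi)
  have hT2split : ∀ i < n, (∫ t in x i..x (i + 1),
        (a0 t * ((Pk i).eval t - u t)) * (w0 i).eval t)
      = (∫ t in x i..x (i + 1), a0 t * (Pk i).eval t * (w0 i).eval t)
        - ∫ t in x i..x (i + 1), a0 t * u t * (w0 i).eval t := by
    intro i hi
    have hsub := hIccsub i hi
    have ha0' : ContinuousOn a0 (Icc (x i) (x (i + 1))) := ha0c.mono hsub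
    have i1 := hint i hi (fun t => a0 t * (Pk i).eval t * (w0 i).eval t) ((ha0'.mul ((Pk i).continuous.continuousOn)).mul
      ((w0 i).continuous.continuousOn))
    have i2 := hint i hi (fun t => a0 t * u t * (w0 i).eval t) ((ha0'.mul (hu.continuousOn.mono hsub)).mul
      ((w0 i).continuous.continuousOn))
    rw [← intervalIntegral.integral_sub i1 i2]
    congr 1; funext t
    ring
  have hT2sum : (∑ i ∈ Finset.range n, ∫ t in x i..x (i + 1),
        (a0 t * ((Pk i).eval t - u t)) * (w0 i).eval t)
      = (∑ i ∈ Finset.range n, ∫ t in x i..x (i + 1), a0 t * (Pk i).eval t * (w0 i).eval t)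
        - ∑ i ∈ Finset.range n, ∫ t in x i..x (i + 1), a0 t * u t * (w0 i).eval t := by
    rw [← Finset.sum_sub_distrib]
    exact Finset.sum_congr rfl fun i hi => hT2split i (Finset.mem_range.mp hi)
  -- the error equation
  have hErrEq : (∑ i ∈ Finset.range n, ∫ t in x i..x (i + 1),
        a2 t * (Dw i).eval t * (Dw i).eval t)
      = (∑ i ∈ Finset.range n, ∫ t in x i..x (i + 1),
          (a2 t * (Dq i).eval t - (ph i).eval t) * (Dw i).eval t)
        + (∑ i ∈ Finset.range n, ∫ t in x i..x (i + 1),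
            (a0 t * ((Pk i).eval t - u t)) * (w0 i).eval t)
        - ∑ i ∈ Finset.range n, ∫ t in x i..x (i + 1), a0 t * (w0 i).eval t ^ 2 := by
    linarith [hsch, hconsSum, hKsum, hL1sum, hT3sum, hT2sum]
    -- quantities
  set Esq := ∑ i ∈ Finset.range n, ∫ t in x i..x (i + 1), (Dw i).eval t ^ 2 with hEsq_def
  have hEsq0 : 0 ≤ Esq := Finset.sum_nonneg fun i hi =>
    intervalIntegral.integral_nonneg (hle i (Finset.mem_range.mp hi)) fun t _ => sq_nonneg _
  set E := Real.sqrt Esq with hE_def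
  have hE0 : 0 ≤ E := Real.sqrt_nonneg _
  set A := ∑ i ∈ Finset.range n, ∫ t in x i..x (i + 1),
      (a2 t * (Dq i).eval t - (ph i).eval t) ^ 2 with hA_def
  set Bq := ∑ i ∈ Finset.range n, ∫ t in x i..x (i + 1),
      (a0 t * ((Pk i).eval t - u t)) ^ 2 with hBq_def
  set Vsq := ∑ i ∈ Finset.range n, ∫ t in x i..x (i + 1), (w0 i).eval t ^ 2 with hVsq_def
  set V := Real.sqrt Vsq with hV_def
  -- coercivity
  have hamain : amin * Esq ≤ ∑ i ∈ Finset.range n, ∫ t in x i..x (i + 1),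
      a2 t * (Dw i).eval t * (Dw i).eval t := by
    rw [hEsq_def, Finset.mul_sum]
    refine Finset.sum_le_sum fun i hi => ?_
    have hi' := Finset.mem_range.mp hi
    rw [← intervalIntegral.integral_const_mul]
    refine intervalIntegral.integral_mono_on (hle i hi')
      ((hint i hi' _ (((Dw i).continuous.pow 2).continuousOn)).const_mul amin)
      (hint i hi' _ (((ha2.continuousOn.mono (hIccsub i hi')).mul
        ((Dw i).continuous.continuousOn)).mul ((Dw i).continuous.continuousOn)))
      fun t ht => ?_
    have h1 := ha2lb t (hIccsub i hi' ht)
    nlinarith [sq_nonneg ((Dw i).eval t)]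
  -- T3 nonneg
  have hT3nn : 0 ≤ ∑ i ∈ Finset.range n, ∫ t in x i..x (i + 1),
      a0 t * (w0 i).eval t ^ 2 := by
    refine Finset.sum_nonneg fun i hi => ?_
    have hi' := Finset.mem_range.mp hi
    exact intervalIntegral.integral_nonneg (hle i hi') fun t ht =>
      mul_nonneg (ha0nn t (hIccsub i hi' ht)) (sq_nonneg _)
  -- Cauchy-Schwarz estimates
  have hT1le : (∑ i ∈ Finset.range n, ∫ t in x i..x (i + 1),
        (a2 t * (Dq i).eval t - (ph i).eval t) * (Dw i).eval t)
      ≤ Real.sqrt A * E := by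
    have h1 : ∀ i ∈ Finset.range n, (∫ t in x i..x (i + 1),
          (a2 t * (Dq i).eval t - (ph i).eval t) * (Dw i).eval t)
        ≤ Real.sqrt (∫ t in x i..x (i + 1), (a2 t * (Dq i).eval t - (ph i).eval t) ^ 2)
          * Real.sqrt (∫ t in x i..x (i + 1), (Dw i).eval t ^ 2) := by
      intro i hi
      have hi' := Finset.mem_range.mp hi
      exact int_cs (hle i hi')
        (((ha2.continuousOn.mono (hIccsub i hi')).mul ((Dq i).continuous.continuousOn)).sub
          ((ph i).continuous.continuousOn)) ((Dw i).continuous.continuousOn)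
    refine (Finset.sum_le_sum h1).trans ?_
    refine my_sum_sqrt _ _ _ (fun i hi => ?_) (fun i hi => ?_)
    · exact intervalIntegral.integral_nonneg (hle i (Finset.mem_range.mp hi))
        fun t _ => sq_nonneg _
    · exact intervalIntegral.integral_nonneg (hle i (Finset.mem_range.mp hi))
        fun t _ => sq_nonneg _
  have hT2le : (∑ i ∈ Finset.range n, ∫ t in x i..x (i + 1),
        (a0 t * ((Pk i).eval t - u t)) * (w0 i).eval t)
      ≤ Real.sqrt Bq * V := by
    have h1 : ∀ i ∈ Finset.range n, (∫ t in x i..x (i + 1),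
          (a0 t * ((Pk i).eval t - u t)) * (w0 i).eval t)
        ≤ Real.sqrt (∫ t in x i..x (i + 1), (a0 t * ((Pk i).eval t - u t)) ^ 2)
          * Real.sqrt (∫ t in x i..x (i + 1), (w0 i).eval t ^ 2) := by
      intro i hi
      have hi' := Finset.mem_range.mp hi
      exact int_cs (hle i hi')
        ((ha0c.mono (hIccsub i hi')).mul (((Pk i).continuous.continuousOn).sub
          (hu.continuousOn.mono (hIccsub i hi'))))
        ((w0 i).continuous.continuousOn)
    refine (Finset.sum_le_sum h1).trans ?_
    refine my_sum_sqrt _ _ _ (fun i hi => ?_) (fun i hi => ?_)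
    · exact intervalIntegral.integral_nonneg (hle i (Finset.mem_range.mp hi))
        fun t _ => sq_nonneg _
    · exact intervalIntegral.integral_nonneg (hle i (Finset.mem_range.mp hi))
        fun t _ => sq_nonneg _
  -- Poincare
  have hVle : V ≤ (b - a) * E :=
    poincare ⟨hN2, hx0, hxn, hxlt⟩ w0 wn Dw hwdeg hwn0 hwD
  -- assemble
  have hA0 : 0 ≤ Real.sqrt A := Real.sqrt_nonneg _
  have hBq0 : 0 ≤ Real.sqrt Bq := Real.sqrt_nonneg _
  have hV0 : 0 ≤ V := Real.sqrt_nonneg _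
  have hmain : amin * Esq ≤ (Real.sqrt A + ((b - a) + 1) * Real.sqrt Bq) * E := by
    have h1 : amin * Esq ≤ Real.sqrt A * E + Real.sqrt Bq * V := by
      calc amin * Esq ≤ ∑ i ∈ Finset.range n, ∫ t in x i..x (i + 1),
            a2 t * (Dw i).eval t * (Dw i).eval t := hamain
        _ ≤ (∑ i ∈ Finset.range n, ∫ t in x i..x (i + 1),
              (a2 t * (Dq i).eval t - (ph i).eval t) * (Dw i).eval t)
            + ∑ i ∈ Finset.range n, ∫ t in x i..x (i + 1),
              (a0 t * ((Pk i).eval t - u t)) * (w0 i).eval t := by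
            rw [hErrEq]
            exact sub_le_self _ hT3nn
        _ ≤ Real.sqrt A * E + Real.sqrt Bq * V := add_le_add hT1le hT2le
    have h2 : Real.sqrt Bq * V ≤ Real.sqrt Bq * ((b - a) * E) :=
      mul_le_mul_of_nonneg_left hVle hBq0
    calc amin * Esq ≤ Real.sqrt A * E + Real.sqrt Bq * V := h1
      _ ≤ Real.sqrt A * E + Real.sqrt Bq * ((b - a) * E) := by linarith
      _ ≤ (Real.sqrt A + ((b - a) + 1) * Real.sqrt Bq) * E := by
          nlinarith [mul_nonneg hBq0 hE0]
  -- rewrite the goal in terms of E, A, Bq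
  have hgoalE : (∑ i ∈ Finset.range n, ∫ t in x i..x (i + 1),
      ((Dq i).eval t - (Du i).eval t) ^ 2) = Esq := by
    rw [hEsq_def]
    refine Finset.sum_congr rfl fun i hi => ?_
    congr 1; funext t
    simp [hDw_def, Polynomial.eval_sub]
  rw [hgoalE]
  rw [← hE_def]
  rcases eq_or_lt_of_le hE0 with h0 | h0
  · rw [← h0, mul_zero]
    have : 0 ≤ ((b - a) + 1) * Real.sqrt Bq :=
      mul_nonneg (by linarith) hBq0
    linarith
  · have h3 : (amin * E) * E ≤ (Real.sqrt A + ((b - a) + 1) * Real.sqrt Bq) * E := by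
      have : E * E = Esq := Real.mul_self_sqrt hEsq0
      calc (amin * E) * E = amin * (E * E) := by ring
        _ = amin * Esq := by rw [this]
        _ ≤ _ := hmain
    exact le_of_mul_le_mul_right h3 h0
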